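/- The function f(y) = (1/y - (5/2)y²)·ln(1-y²) + ln(1 + (1-y²)(1/y - (5/2)y²)) is strictly positive on the interval (0, √((3-√5)/2)). -/

import Mathlib

set_option maxHeartbeats 4000000

private lemma aux_log_lb (u : ℝ) (hu : 0 < u) : u/(1+u) ≤ Real.log (1+u) := by
  have h1u : (0:ℝ) < 1 + u := by linarith
  have h1u' : (1:ℝ) + u ≠ 0 := ne_of_gt h1u
  have h := Real.log_le_sub_one_of_pos (show (0:ℝ) < (1+u)⁻¹ from inv_pos.2 h1u)
  rw [Real.log_inv] at h
  have heq : u/(1+u) = 1 - (1+u)⁻¹ := by field_simp; ring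
  rw [heq]; linarith

private lemma aux_log_lb2 (x : ℝ) (hx0 : 0 ≤ x) (hx1 : x < 1) :
    -(x/(1-x)) ≤ Real.log (1-x) := by
  have h1x : (0:ℝ) < 1 - x := by linarith
  have h1x' : (1:ℝ) - x ≠ 0 := ne_of_gt h1x
  have h := Real.log_le_sub_one_of_pos (show (0:ℝ) < (1-x)⁻¹ from inv_pos.2 h1x)
  rw [Real.log_inv] at h
  have heq : x/(1-x) = (1-x)⁻¹ - 1 := by field_simp; ring
  linarith [heq ▸ h]

theorem stmt_10 (y : ℝ) (hy : y ∈ Set.Ioo (0:ℝ) (Real.sqrt ((3 - Real.sqrt 5) / 2))) :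
    0 < (1 / y - (5 / 2) * y ^ 2) * Real.log (1 - y ^ 2) +
      Real.log (1 + (1 - y ^ 2) * (1 / y - (5 / 2) * y ^ 2)) := by
  obtain ⟨hy0, hyc⟩ := hy
  have hs5 : (2789/1250 : ℝ) < Real.sqrt 5 := by
    rw [show (2789/1250:ℝ) = Real.sqrt ((2789/1250)^2) from Real.sqrt_sq (by norm_num) |>.symm]
    exact Real.sqrt_lt_sqrt (by positivity) (by norm_num)
  have hs5u : Real.sqrt 5 < 9/4 := by
    rw [show (9/4:ℝ) = Real.sqrt ((9/4)^2) from Real.sqrt_sq (by norm_num) |>.symm]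
    exact Real.sqrt_lt_sqrt (by norm_num) (by norm_num)
  have hcb : Real.sqrt ((3 - Real.sqrt 5) / 2) < 31/50 := by
    rw [show (31/50:ℝ) = Real.sqrt ((31/50)^2) from Real.sqrt_sq (by norm_num) |>.symm]
    exact Real.sqrt_lt_sqrt (by linarith) (by norm_num; linarith)
  have hyb : y < 31/50 := lt_trans hyc hcb
  have hy1 : y < 1 := by linarith
  have hm : (0:ℝ) < 1 - y^2 := by nlinarith
  have hq : (0:ℝ) < 2 - 5*y^3 := by nlinarith
  have hA : (0:ℝ) < 1/y - (5/2)*y^2 := by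
    rw [show 1/y - (5/2)*y^2 = (2 - 5*y^3)/(2*y) by field_simp]
    exact div_pos hq (by positivity)
  have hU : (0:ℝ) < (1 - y^2) * (1/y - (5/2)*y^2) := mul_pos hm hA
  have h1U : (0:ℝ) < 1 + (1 - y^2) * (1/y - (5/2)*y^2) := by linarith
  have hQpos : (0:ℝ) < (1-y^2)*(2-5*y^3)+2*y := by
    have := mul_pos hm hq; linarith
  by_cases hsp : y ≤ 1/2
  · -- region 1 : 0 < y ≤ 1/2
    have hlx := aux_log_lb2 (y^2) (by positivity) (by nlinarith)
    have hlu := aux_log_lb ((1 - y^2) * (1/y - (5/2)*y^2)) hU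
    have hAlx : (1/y - (5/2)*y^2) * (-(y^2/(1-y^2))) ≤ (1/y - (5/2)*y^2) * Real.log (1 - y^2) :=
      mul_le_mul_of_nonneg_left hlx hA.le
    have hR1 : (0:ℝ) < 2 - 2*y - 6*y^2 + 2*y^3 + 7*y^4 - 5*y^6 := by
      have e6 : (0:ℝ) < (7) * y^6 := by positivity
      have e0 : (0:ℝ) ≤ (128) * (1/2 - y)^6 := mul_nonneg (by norm_num) (pow_nonneg (by linarith) 6)
      have e1 : (0:ℝ) ≤ (704) * y^1 * (1/2 - y)^5 := mul_nonneg (mul_nonneg (by norm_num) (pow_nonneg hy0.le 1)) (pow_nonneg (by linarith) 5)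
      have e2 : (0:ℝ) ≤ (1504) * y^2 * (1/2 - y)^4 := mul_nonneg (mul_nonneg (by norm_num) (pow_nonneg hy0.le 2)) (pow_nonneg (by linarith) 4)
      have e3 : (0:ℝ) ≤ (1552) * y^3 * (1/2 - y)^3 := mul_nonneg (mul_nonneg (by norm_num) (pow_nonneg hy0.le 3)) (pow_nonneg (by linarith) 3)
      have e4 : (0:ℝ) ≤ (780) * y^4 * (1/2 - y)^2 := mul_nonneg (mul_nonneg (by norm_num) (pow_nonneg hy0.le 4)) (pow_nonneg (by linarith) 2)
      have e5 : (0:ℝ) ≤ (168) * y^5 * (1/2 - y)^1 := mul_nonneg (mul_nonneg (by norm_num) (pow_nonneg hy0.le 5)) (pow_nonneg (by linarith) 1)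
      linarith [e0,e1,e2,e3,e4,e5,e6]
    have hy0' : y ≠ 0 := ne_of_gt hy0
    have hm' : (1:ℝ) - y^2 ≠ 0 := ne_of_gt hm
    have hQ' : (1-y^2)*(2-5*y^3)+2*y ≠ 0 := ne_of_gt hQpos
    have e1 : ((1 - y^2) * (1/y - (5/2)*y^2))/(1 + (1 - y^2) * (1/y - (5/2)*y^2))
        = ((1-y^2)*(2-5*y^3))/((1-y^2)*(2-5*y^3)+2*y) := by
      rw [div_eq_div_iff h1U.ne' hQpos.ne']
      field_simp
      ring
    have e2 : (1/y - (5/2)*y^2) * (y^2/(1-y^2)) = (y*(2-5*y^3))/(2*(1-y^2)) := by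
      rw [eq_div_iff (mul_ne_zero two_ne_zero hm.ne')]
      field_simp
    have hkey : ((1 - y^2) * (1/y - (5/2)*y^2))/(1 + (1 - y^2) * (1/y - (5/2)*y^2))
        - (1/y - (5/2)*y^2) * (y^2/(1-y^2))
        = ((2-5*y^3) * (2 - 2*y - 6*y^2 + 2*y^3 + 7*y^4 - 5*y^6))
          / (2*(1-y^2)*((1-y^2)*(2-5*y^3)+2*y)) := by
      rw [e1, e2]
      rw [div_sub_div _ _ hQpos.ne' (mul_ne_zero two_ne_zero hm.ne'), div_eq_div_iff
        (mul_ne_zero hQpos.ne' (mul_ne_zero two_ne_zero hm.ne'))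
        (mul_ne_zero (mul_ne_zero two_ne_zero hm.ne') hQpos.ne')]
      ring
    have hpos : (0:ℝ) < ((2-5*y^3) * (2 - 2*y - 6*y^2 + 2*y^3 + 7*y^4 - 5*y^6))
          / (2*(1-y^2)*((1-y^2)*(2-5*y^3)+2*y)) := by
      apply div_pos (mul_pos hq hR1)
      have := mul_pos hm hQpos
      linarith [mul_pos (mul_pos (show (0:ℝ) < 2 by norm_num) hm) hQpos]
    rw [← hkey] at hpos
    linarith
  · -- region 2 : 1/2 < y < 31/50
    push_neg at hsp
    have hge : (0:ℝ) ≤ y - 1/2 := by linarith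
    have hlt : (0:ℝ) < 31/50 - y := by linarith
    have hx1 : |y^2| < 1 := by rw [abs_of_nonneg (by positivity : (0:ℝ) ≤ y^2)]; nlinarith
    have h1 := Real.abs_log_sub_add_sum_range_le hx1 4
    rw [abs_of_nonneg (by positivity : (0:ℝ) ≤ y^2)] at h1
    have hlow1 := (abs_le.mp h1).1
    simp only [Finset.sum_range_succ, Finset.sum_range_zero] at hlow1
    norm_num at hlow1
    -- hlow1 : -((y^2)^5/(1-y^2)) ≤ sum + log (1-y^2)  (some normalized shape)
    set U := (1 - y^2) * (1/y - (5/2)*y^2) with hU_def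
    set w := U / (1 + U) with hw_def
    have hwpos : (0:ℝ) < w := by rw [hw_def]; exact div_pos hU h1U
    have hw1 : w < 1 := by rw [hw_def, div_lt_one h1U]; linarith
    have hwa : |w| < 1 := by rwa [abs_of_nonneg hwpos.le]
    have h2 := Real.abs_log_sub_add_sum_range_le hwa 4
    rw [abs_of_nonneg hwpos.le] at h2
    have h1w : (1:ℝ) - w = (1 + U)⁻¹ := by
      have h1U' : (1:ℝ) + U ≠ 0 := ne_of_gt h1U
      rw [hw_def]
      field_simp
      ring
    have hlogw : Real.log (1 - w) = -Real.log (1 + U) := by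
      rw [h1w, Real.log_inv]
    rw [hlogw] at h2
    have hew : w^5/(1-w) = w^5*(1+U) := by rw [h1w, div_eq_mul_inv, inv_inv]
    have hup2 := (abs_le.mp h2).2
    simp only [Finset.sum_range_succ, Finset.sum_range_zero] at hup2
    norm_num at hup2
    rw [hew] at hup2
    -- hup2 : sumw - log(1+U) ≤ w^5*(1+U)
    have hAlx : (1/y - (5/2)*y^2) * (-(y^2 + y^4/2 + y^6/3 + y^8/4) - (y^2)^5/(1-y^2))
        ≤ (1/y - (5/2)*y^2) * Real.log (1 - y^2) := by
      apply mul_le_mul_of_nonneg_left _ hA.le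
      linarith [hlow1]
    have hNpos : (0:ℝ) < (-960) + (2000)*y + (8960)*y^2 + (1520)*y^3 + (-51520)*y^4 + (-71680)*y^5 + (109760)*y^6 + (345800)*y^7 + (79200)*y^8 + (-768640)*y^9 + (-879240)*y^10 + (649240)*y^11 + (1986700)*y^12 + (656485)*y^13 + (-2113580)*y^14 + (-2242755)*y^15 + (526290)*y^16 + (2321280)*y^17 + (1289730)*y^18 + (-660475)*y^19 + (-1382175)*y^20 + (-1029000)*y^21 + (90875)*y^22 + (2484125/2)*y^23 + (952500)*y^24 + (-636875/2)*y^25 + (-1055000)*y^26 + (-456250)*y^27 + (578125)*y^28 + (550000)*y^29 + (-140625)*y^30 + (-578125/2)*y^31 + (140625/2)*y^33 := by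
      have t0 : (0:ℝ) < (6875059443389708833949125477147390483878552913665771484375/31834644439785603537567744) * (31/50 - y)^33 := mul_pos (by norm_num) (pow_pos hlt 33)
      have t1 : (0:ℝ) ≤ (218068477051588092453793255032223896705545485019683837890625/31834644439785603537567744) * (y - 1/2)^1 * (31/50 - y)^32 := mul_nonneg (mul_nonneg (by norm_num) (pow_nonneg hge 1)) (pow_nonneg hlt.le 32)
      have t2 : (0:ℝ) ≤ (52308418718048665420339293774532052339054644107818603515625/497416319371650055274496) * (y - 1/2)^2 * (31/50 - y)^31 := mul_nonneg (mul_nonneg (by norm_num) (pow_nonneg hge 2)) (pow_nonneg hlt.le 31)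
      have t3 : (0:ℝ) ≤ (38347006411075935765342403982458563405089080333709716796875/36845653286788892983296) * (y - 1/2)^3 * (31/50 - y)^30 := mul_nonneg (mul_nonneg (by norm_num) (pow_nonneg hge 3)) (pow_nonneg hlt.le 30)
      have t4 : (0:ℝ) ≤ (29693407701169748689161431709493399466737173497676849365234375/3979330554973200442195968) * (y - 1/2)^4 * (31/50 - y)^29 := mul_nonneg (mul_nonneg (by norm_num) (pow_nonneg hge 4)) (pow_nonneg hlt.le 29)
      have t5 : (0:ℝ) ≤ (164321742592987527586241569554914576656301505863666534423828125/3979330554973200442195968) * (y - 1/2)^5 * (31/50 - y)^28 := mul_nonneg (mul_nonneg (by norm_num) (pow_nonneg hge 5)) (pow_nonneg hlt.le 28)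
      have t6 : (0:ℝ) ≤ (182550178749905349303183921261251043688389472663402557373046875/994832638743300110548992) * (y - 1/2)^6 * (31/50 - y)^27 := mul_nonneg (mul_nonneg (by norm_num) (pow_nonneg hge 6)) (pow_nonneg hlt.le 27)
      have t7 : (0:ℝ) ≤ (1161624903973273349819150812578527620644308626651763916015625/1727139997818229358592) * (y - 1/2)^7 * (31/50 - y)^26 := mul_nonneg (mul_nonneg (by norm_num) (pow_nonneg hge 7)) (pow_nonneg hlt.le 26)
      have t8 : (0:ℝ) ≤ (1832830056607122832705907452766069809513282962143421173095703125/884295678882933431599104) * (y - 1/2)^8 * (31/50 - y)^25 := mul_nonneg (mul_nonneg (by norm_num) (pow_nonneg hge 8)) (pow_nonneg hlt.le 25)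
      have t9 : (0:ℝ) ≤ (14449890096858802979140389935199806359378271736204624176025390625/2652887036648800294797312) * (y - 1/2)^9 * (31/50 - y)^24 := mul_nonneg (mul_nonneg (by norm_num) (pow_nonneg hge 9)) (pow_nonneg hlt.le 24)
      have t10 : (0:ℝ) ≤ (255718969038223098216450368003194171251379884779453277587890625/20725679973818752303104) * (y - 1/2)^10 * (31/50 - y)^23 := mul_nonneg (mul_nonneg (by norm_num) (pow_nonneg hge 10)) (pow_nonneg hlt.le 23)
      have t11 : (0:ℝ) ≤ (8054445984500787068551009440541093908905168063938617706298828125/331610879581100036849664) * (y - 1/2)^11 * (31/50 - y)^22 := mul_nonneg (mul_nonneg (by norm_num) (pow_nonneg hge 11)) (pow_nonneg hlt.le 22)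
      have t12 : (0:ℝ) ≤ (18488167902338931821219358166713665241331909783184528350830078125/442147839441466715799552) * (y - 1/2)^12 * (31/50 - y)^21 := mul_nonneg (mul_nonneg (by norm_num) (pow_nonneg hge 12)) (pow_nonneg hlt.le 21)
      have t13 : (0:ℝ) ≤ (83899883226667653117469890776272330595020321197807788848876953125/1326443518324400147398656) * (y - 1/2)^13 * (31/50 - y)^20 := mul_nonneg (mul_nonneg (by norm_num) (pow_nonneg hge 13)) (pow_nonneg hlt.le 20)
      have t14 : (0:ℝ) ≤ (27976155814533875700056609108583771236226311884820461273193359375/331610879581100036849664) * (y - 1/2)^14 * (31/50 - y)^19 := mul_nonneg (mul_nonneg (by norm_num) (pow_nonneg hge 14)) (pow_nonneg hlt.le 19)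
      have t15 : (0:ℝ) ≤ (16490363761723813331062767593861509838243364356458187103271484375/165805439790550018424832) * (y - 1/2)^15 * (31/50 - y)^18 := mul_nonneg (mul_nonneg (by norm_num) (pow_nonneg hge 15)) (pow_nonneg hlt.le 18)
      have t16 : (0:ℝ) ≤ (183545355957049766223342659412447087371142697520554065704345703125/1768591357765866863198208) * (y - 1/2)^16 * (31/50 - y)^17 := mul_nonneg (mul_nonneg (by norm_num) (pow_nonneg hge 16)) (pow_nonneg hlt.le 17)
      have t17 : (0:ℝ) ≤ (169620213812628957789320895679244353302695672027766704559326171875/1768591357765866863198208) * (y - 1/2)^17 * (31/50 - y)^16 := mul_nonneg (mul_nonneg (by norm_num) (pow_nonneg hge 17)) (pow_nonneg hlt.le 16)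
      have t18 : (0:ℝ) ≤ (13010458495479206506441436191797852393382838927209377288818359375/165805439790550018424832) * (y - 1/2)^18 * (31/50 - y)^15 := mul_nonneg (mul_nonneg (by norm_num) (pow_nonneg hge 18)) (pow_nonneg hlt.le 15)
      have t19 : (0:ℝ) ≤ (18825776966247293807693410882047186382216532714664936065673828125/331610879581100036849664) * (y - 1/2)^19 * (31/50 - y)^14 := mul_nonneg (mul_nonneg (by norm_num) (pow_nonneg hge 19)) (pow_nonneg hlt.le 14)
      have t20 : (0:ℝ) ≤ (48073145328854751388212030054663361800909303538501262664794921875/1326443518324400147398656) * (y - 1/2)^20 * (31/50 - y)^13 := mul_nonneg (mul_nonneg (by norm_num) (pow_nonneg hge 20)) (pow_nonneg hlt.le 13)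
      have t21 : (0:ℝ) ≤ (8998246124735121510184927515200222858731586866080760955810546875/442147839441466715799552) * (y - 1/2)^21 * (31/50 - y)^12 := mul_nonneg (mul_nonneg (by norm_num) (pow_nonneg hge 21)) (pow_nonneg hlt.le 12)
      have t22 : (0:ℝ) ≤ (3318949781791013402320164930908243753983671596944332122802734375/331610879581100036849664) * (y - 1/2)^22 * (31/50 - y)^11 := mul_nonneg (mul_nonneg (by norm_num) (pow_nonneg hge 22)) (pow_nonneg hlt.le 11)
      have t23 : (0:ℝ) ≤ (355336143370501693036067460038943884529758303177356719970703125/82902719895275009212416) * (y - 1/2)^23 * (31/50 - y)^10 := mul_nonneg (mul_nonneg (by norm_num) (pow_nonneg hge 23)) (pow_nonneg hlt.le 10)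
      have t24 : (0:ℝ) ≤ (4208915480854683112899469288357287451810101444509029388427734375/2652887036648800294797312) * (y - 1/2)^24 * (31/50 - y)^9 := mul_nonneg (mul_nonneg (by norm_num) (pow_nonneg hge 24)) (pow_nonneg hlt.le 9)
      have t25 : (0:ℝ) ≤ (444550243572440845425557797685732976515604825657939910888671875/884295678882933431599104) * (y - 1/2)^25 * (31/50 - y)^8 := mul_nonneg (mul_nonneg (by norm_num) (pow_nonneg hge 25)) (pow_nonneg hlt.le 8)
      have t26 : (0:ℝ) ≤ (3721098603556976605471090790386658781808684855106353759765625/27634239965091669737472) * (y - 1/2)^26 * (31/50 - y)^7 := mul_nonneg (mul_nonneg (by norm_num) (pow_nonneg hge 26)) (pow_nonneg hlt.le 7)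
      have t27 : (0:ℝ) ≤ (29831504589752445367904093017753441748702290642081451416015625/994832638743300110548992) * (y - 1/2)^27 * (31/50 - y)^6 := mul_nonneg (mul_nonneg (by norm_num) (pow_nonneg hge 27)) (pow_nonneg hlt.le 6)
      have t28 : (0:ℝ) ≤ (21599217675331309186310888168039662255644252237407440185546875/3979330554973200442195968) * (y - 1/2)^28 * (31/50 - y)^5 := mul_nonneg (mul_nonneg (by norm_num) (pow_nonneg hge 28)) (pow_nonneg hlt.le 5)
      have t29 : (0:ℝ) ≤ (3078632002686629070635246111502270920135335604608218994140625/3979330554973200442195968) * (y - 1/2)^29 * (31/50 - y)^4 := mul_nonneg (mul_nonneg (by norm_num) (pow_nonneg hge 29)) (pow_nonneg hlt.le 4)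
      have t30 : (0:ℝ) ≤ (9156467053323419712279795099995148720072016448897216796875/110536959860366678949888) * (y - 1/2)^30 * (31/50 - y)^3 := mul_nonneg (mul_nonneg (by norm_num) (pow_nonneg hge 30)) (pow_nonneg hlt.le 3)
      have t31 : (0:ℝ) ≤ (3071796290419101679040201502310673198899159438052705078125/497416319371650055274496) * (y - 1/2)^31 * (31/50 - y)^2 := mul_nonneg (mul_nonneg (by norm_num) (pow_nonneg hge 31)) (pow_nonneg hlt.le 2)
      have t32 : (0:ℝ) ≤ (8871069834307989619169210338067661365493291370166577734375/31834644439785603537567744) * (y - 1/2)^32 * (31/50 - y)^1 := mul_nonneg (mul_nonneg (by norm_num) (pow_nonneg hge 32)) (pow_nonneg hlt.le 1)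
      have t33 : (0:ℝ) ≤ (172679026707286975394764834489658415750846379874876140625/31834644439785603537567744) * (y - 1/2)^33 := mul_nonneg (by norm_num) (pow_nonneg hge 33)
      linarith [t0, t1, t2, t3, t4, t5, t6, t7, t8, t9, t10, t11, t12, t13, t14, t15, t16, t17, t18, t19, t20, t21, t22, t23, t24, t25, t26, t27, t28, t29, t30, t31, t32, t33]
    have hwP : w = ((1-y^2)*(2-5*y^3))/((1-y^2)*(2-5*y^3)+2*y) := by
      rw [hw_def, div_eq_div_iff h1U.ne' hQpos.ne', hU_def]
      field_simp
      ring
    have h1UQ : 1 + U = ((1-y^2)*(2-5*y^3)+2*y)/(2*y) := by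
      rw [eq_div_iff (mul_ne_zero two_ne_zero hy0.ne'), hU_def]
      field_simp
      ring
    have hkey : (w + w^2/2 + w^3/3 + w^4/4 - w^5*(1+U))
        - (1/y - (5/2)*y^2) * ((y^2 + y^4/2 + y^6/3 + y^8/4) + (y^2)^5/(1-y^2))
        = ((-960) + (2000)*y + (8960)*y^2 + (1520)*y^3 + (-51520)*y^4 + (-71680)*y^5 + (109760)*y^6 + (345800)*y^7 + (79200)*y^8 + (-768640)*y^9 + (-879240)*y^10 + (649240)*y^11 + (1986700)*y^12 + (656485)*y^13 + (-2113580)*y^14 + (-2242755)*y^15 + (526290)*y^16 + (2321280)*y^17 + (1289730)*y^18 + (-660475)*y^19 + (-1382175)*y^20 + (-1029000)*y^21 + (90875)*y^22 + (2484125/2)*y^23 + (952500)*y^24 + (-636875/2)*y^25 + (-1055000)*y^26 + (-456250)*y^27 + (578125)*y^28 + (550000)*y^29 + (-140625)*y^30 + (-578125/2)*y^31 + (140625/2)*y^33) / (60*y*(1-y^2)*((1-y^2)*(2-5*y^3)+2*y)^4) := by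
      have hy0' : y ≠ 0 := ne_of_gt hy0
      have hm' : (1:ℝ) - y^2 ≠ 0 := ne_of_gt hm
      have hQ' : (1-y^2)*(2-5*y^3)+2*y ≠ 0 := ne_of_gt hQpos
      rw [hwP, h1UQ]
      generalize hQd : (1-y^2)*(2-5*y^3)+2*y = Q at hQ' ⊢
      field_simp
      subst hQd
      ring
    have hpos : (0:ℝ) < ((-960) + (2000)*y + (8960)*y^2 + (1520)*y^3 + (-51520)*y^4 + (-71680)*y^5 + (109760)*y^6 + (345800)*y^7 + (79200)*y^8 + (-768640)*y^9 + (-879240)*y^10 + (649240)*y^11 + (1986700)*y^12 + (656485)*y^13 + (-2113580)*y^14 + (-2242755)*y^15 + (526290)*y^16 + (2321280)*y^17 + (1289730)*y^18 + (-660475)*y^19 + (-1382175)*y^20 + (-1029000)*y^21 + (90875)*y^22 + (2484125/2)*y^23 + (952500)*y^24 + (-636875/2)*y^25 + (-1055000)*y^26 + (-456250)*y^27 + (578125)*y^28 + (550000)*y^29 + (-140625)*y^30 + (-578125/2)*y^31 + (140625/2)*y^33) / (60*y*(1-y^2)*((1-y^2)*(2-5*y^3)+2*y)^4) := by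
      apply div_pos hNpos
      have h60 : (0:ℝ) < 60*y := by linarith
      exact mul_pos (mul_pos h60 hm) (pow_pos hQpos 4)
    rw [← hkey] at hpos
    have hlu : w + w^2/2 + w^3/3 + w^4/4 - w^5*(1+U) ≤ Real.log (1 + U) := by
      linarith [hup2]
    linarith [hkey ▸ hpos, hAlx, hlu]
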